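/- If f : X → Y and g : Y → Z are globally multi-split continuous functions between topological spaces, then the composition g ∘ f : X → Z is globally multi-split continuous. -/

import Mathlib

open Filter Topology Set

universe u v w

variable {X : Type u} {Y : Type v} [TopologicalSpace X] [TopologicalSpace Y]

/-- `Z` is a set of extended values of `f` at `p`. -/
def ExtendedValues (f : X → Y) (p : X) (Z : Set Y) : Prop :=
  Z.Finite ∧ Z.Nonempty ∧
    (∀ y ∈ Z, ∀ U ∈ 𝓝 p, ∀ V ∈ 𝓝 y, (f '' U ∩ V).Nonempty) ∧
    (∀ V ∈ 𝓝ˢ Z, ∃ U ∈ 𝓝 p, f '' U ⊆ V)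

/-- `f` is multi-split continuous at `p`. -/
def MultiSplitAt (f : X → Y) (p : X) : Prop := ∃ Z : Set Y, ExtendedValues f p Z

theorem stmt4 {Z : Type w} [TopologicalSpace Z] (f : X → Y) (g : Y → Z)
    (hf : ∀ p : X, MultiSplitAt f p) (hg : ∀ q : Y, MultiSplitAt g q) :
    ∀ p : X, MultiSplitAt (g ∘ f) p := by
  intro p
  obtain ⟨S, hSfin, hSne, _hSa, hSb⟩ := hf p
  choose W hW using hg
  -- the big candidate set
  set T : Set Z := ⋃ y ∈ S, W y with hT
  have hTfin : T.Finite := hSfin.biUnion fun y _ => (hW y).1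
  set F : Filter Z := Filter.map (g ∘ f) (𝓝 p) with hF
  have hFne : F.NeBot := Filter.map_neBot
  -- key: F ≤ 𝓝ˢ T
  have hle : F ≤ 𝓝ˢ T := by
    intro V hV
    have hpre : g ⁻¹' V ∈ 𝓝ˢ S := by
      rw [mem_nhdsSet_iff_forall]
      intro y hy
      have hVy : V ∈ 𝓝ˢ (W y) :=
        nhdsSet_mono (subset_biUnion_of_mem (u := fun y => W y) hy) hV
      obtain ⟨U, hU, hUV⟩ := (hW y).2.2.2 V hVy
      exact mem_of_superset hU fun x hx => hUV ⟨x, hx, rfl⟩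
    obtain ⟨U, hU, hUV⟩ := hSb _ hpre
    have : U ⊆ (g ∘ f) ⁻¹' V := fun x hx => hUV ⟨x, hx, rfl⟩
    exact Filter.mem_map.2 (mem_of_superset hU this)
  -- prune T to the cluster points of F
  set T' : Set Z := {z ∈ T | ClusterPt z F} with hT'
  have hT'sub : T' ⊆ T := sep_subset _ _
  have hBfin : (T \ T').Finite := hTfin.subset diff_subset
  have hle' : F ≤ 𝓝ˢ T' := by
    intro V hV
    have hbad : ∀ z ∈ T \ T', ∃ P ∈ 𝓝 z, ∃ A ∈ F, P ∩ A = ∅ := by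
      intro z hz
      have : ¬ ClusterPt z F := fun h => hz.2 ⟨hz.1, h⟩
      have : 𝓝 z ⊓ F = ⊥ := by
        by_contra h
        exact this (Filter.neBot_iff.2 h)
      exact Filter.inf_eq_bot_iff.1 this
    choose! P hP A hA hPA using hbad
    have hAmem : (⋂ z ∈ T \ T', A z) ∈ F := (Filter.biInter_mem hBfin).2 hA
    have hVB : V ∪ ⋃ z ∈ T \ T', P z ∈ 𝓝ˢ T := by
      rw [mem_nhdsSet_iff_forall]
      intro x hx
      by_cases hx' : x ∈ T'
      · exact mem_of_superset (mem_nhdsSet_iff_forall.1 hV x hx') subset_union_left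
      · have hxB : x ∈ T \ T' := ⟨hx, hx'⟩
        exact mem_of_superset (hP x hxB)
          (subset_union_of_subset_right (subset_biUnion_of_mem hxB) _)
    have hVBF : V ∪ ⋃ z ∈ T \ T', P z ∈ F := hle hVB
    refine mem_of_superset (Filter.inter_mem hAmem hVBF) ?_
    rintro w ⟨hwA, hwVB⟩
    rcases hwVB with hwV | hwP
    · exact hwV
    · rcases mem_iUnion₂.1 hwP with ⟨z, hz, hwPz⟩
      have : w ∈ P z ∩ A z := ⟨hwPz, mem_iInter₂.1 hwA z hz⟩
      rw [hPA z hz] at this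
      exact this.elim
  have hT'ne : T'.Nonempty := by
    rw [nonempty_iff_ne_empty]
    intro h
    rw [h, nhdsSet_empty, le_bot_iff] at hle'
    exact hFne.ne hle'
  refine ⟨T', hTfin.subset hT'sub, hT'ne, ?_, ?_⟩
  · intro z hz U hU V hV
    have hA : (g ∘ f) '' U ∈ F := Filter.image_mem_map hU
    have := clusterPt_iff_nonempty.1 hz.2 hV hA
    rwa [inter_comm] at this
  · intro V hV
    have : (g ∘ f) ⁻¹' V ∈ 𝓝 p := Filter.mem_map.1 (hle' hV)
    exact ⟨_, this, image_preimage_subset _ _⟩
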